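/- Let Γ be a finite simplicial graph with nontrivial vertex groups {G_i}. Then the commutator subgroup [W_Γ, W_Γ] of the right-angled Coxeter group W_Γ on Γ is a retract of the kernel K_Γ = ker(G_Γ → ∏ G_i). -/

import Mathlib

open Monoid
open scoped commutatorElement

namespace GPaper

variable {ι : Type*}

/-- The relator subgroup of the graph product: normal closure of commutators of
elements of vertex groups at adjacent vertices. -/
def Rels (Γ : SimpleGraph ι) (G : ι → Type*) [∀ i, Group (G i)] : Subgroup (Monoid.CoprodI G) :=
  Subgroup.normalClosure
    { x | ∃ (i j : ι) (g : G i) (h : G j), Γ.Adj i j ∧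
          x = ⁅Monoid.CoprodI.of g, Monoid.CoprodI.of h⁆ }

instance (Γ : SimpleGraph ι) (G : ι → Type*) [∀ i, Group (G i)] : (Rels Γ G).Normal :=
  Subgroup.normalClosure_normal

/-- The graph product of the groups `G i` over the simplicial graph `Γ`. -/
abbrev GP (Γ : SimpleGraph ι) (G : ι → Type*) [∀ i, Group (G i)] :=
  Monoid.CoprodI G ⧸ Rels Γ G

/-- The canonical inclusion of a vertex group into the graph product. -/
def of (Γ : SimpleGraph ι) (G : ι → Type*) [∀ i, Group (G i)] (i : ι) : G i →* GP Γ G :=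
  (QuotientGroup.mk' (Rels Γ G)).comp Monoid.CoprodI.of

/-- The canonical homomorphism from the graph product to the direct product. -/
def proj [DecidableEq ι] (Γ : SimpleGraph ι) (G : ι → Type*) [∀ i, Group (G i)] :
    GP Γ G →* (∀ i, G i) :=
  QuotientGroup.lift (Rels Γ G) (Monoid.CoprodI.lift (fun i => MonoidHom.mulSingle G i)) (by
    intro x hx
    refine Subgroup.normalClosure_le_normal ?_ hx
    rintro y ⟨i, j, g, h, hadj, rfl⟩
    have hij : i ≠ j := hadj.ne
    simp only [SetLike.mem_coe, MonoidHom.mem_ker, map_commutatorElement,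
      Monoid.CoprodI.lift_of]
    rw [commutatorElement_eq_one_iff_commute]
    exact Pi.mulSingle_commute hij g h)

/-- The canonical epimorphism `G_Γ → G_Γ'` when `Γ'` is obtained from `Γ` by adding edges. -/
def mapGraph (Γ Γ' : SimpleGraph ι) (hΓ : Γ ≤ Γ') (G : ι → Type*) [∀ i, Group (G i)] :
    GP Γ G →* GP Γ' G :=
  QuotientGroup.lift (Rels Γ G) (QuotientGroup.mk' (Rels Γ' G)) (by
    intro x hx
    rw [QuotientGroup.ker_mk']
    refine Subgroup.normalClosure_le_normal ?_ hx
    rintro y ⟨i, j, g, h, hadj, rfl⟩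
    exact Subgroup.subset_normalClosure ⟨i, j, g, h, hΓ hadj, rfl⟩)

/-- The element of the graph product represented by a word (list of syllables). -/
def wordProd (Γ : SimpleGraph ι) (G : ι → Type*) [∀ i, Group (G i)]
    (w : List (Σ i, G i)) : GP Γ G :=
  (w.map fun s => of Γ G s.1 s.2).prod

/-- The image of a word in the direct product of the vertex groups. -/
def piProd [DecidableEq ι] (G : ι → Type*) [∀ i, Group (G i)]
    (w : List (Σ i, G i)) : ∀ i, G i :=
  (w.map fun s => Pi.mulSingle s.1 s.2).prod

/-- The ordered product of those syllables of a word that belong to `G i`. -/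
def sylProd [DecidableEq ι] (G : ι → Type*) [∀ i, Group (G i)]
    (w : List (Σ i, G i)) (i : ι) : G i :=
  (w.filterMap fun s => if h : s.1 = i then some (cast (congrArg G h) s.2) else none).prod

/-- The normal (syllable) length of an element of a graph product:
the minimal number of syllables in a word representing it. -/
noncomputable def nl (Γ : SimpleGraph ι) (G : ι → Type*) [∀ i, Group (G i)]
    (g : GP Γ G) : ℕ :=
  sInf { n | ∃ w : List (Σ i, G i), wordProd Γ G w = g ∧ w.length = n }

section Phi

open scoped Classical

variable [DecidableEq ι] {G G' : ι → Type*} [∀ i, Group (G i)] [∀ i, Group (G' i)]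

/-- One step of the recursive construction of `Φ`: the new syllable
`f(π(w))⁻¹ · f(π(w)s)` (dropped if trivial), where `g = π(w)`. -/
noncomputable def phiStep (f : ∀ i, G i → G' i) (g : ∀ i, G i) (s : Σ i, G i) : List (Σ i, G' i) :=
  if (f s.1 (g s.1))⁻¹ * f s.1 (g s.1 * s.2) = 1 then []
  else [⟨s.1, (f s.1 (g s.1))⁻¹ * f s.1 (g s.1 * s.2)⟩]

/-- Auxiliary recursion: process the word left to right, carrying the
image `g` of the prefix in the direct product. -/
noncomputable def phiAux (f : ∀ i, G i → G' i) : (∀ i, G i) → List (Σ i, G i) → List (Σ i, G' i)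
  | _, [] => []
  | g, s :: w => phiStep f g s ++ phiAux f (g * Pi.mulSingle s.1 s.2) w

/-- The word map `Φ : S* → S'*` induced by the set maps `f i : G i → G' i`. -/
noncomputable def phiWord (f : ∀ i, G i → G' i) (w : List (Σ i, G i)) : List (Σ i, G' i) :=
  phiAux f 1 w

end Phi


-- ## auxiliary development

section Retract

variable [DecidableEq ι]

lemma of_commute {Γ : SimpleGraph ι} {G : ι → Type*} [∀ i, Group (G i)] {i j : ι}
    (hadj : Γ.Adj i j) (x : G i) (y : G j) : Commute (of Γ G i x) (of Γ G j y) := by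
  rw [← commutatorElement_eq_one_iff_commute]
  have hmem : (⁅Monoid.CoprodI.of x, Monoid.CoprodI.of y⁆ : Monoid.CoprodI G) ∈ Rels Γ G :=
    Subgroup.subset_normalClosure ⟨i, j, x, y, hadj, rfl⟩
  have : ⁅of Γ G i x, of Γ G j y⁆
      = QuotientGroup.mk' (Rels Γ G) ⁅Monoid.CoprodI.of x, Monoid.CoprodI.of y⁆ := by
    simp [of, map_commutatorElement]
  rw [this]
  exact (QuotientGroup.eq_one_iff _).2 hmem

@[simp] lemma proj_of {Γ : SimpleGraph ι} {G : ι → Type*} [∀ i, Group (G i)] (i : ι) (s : G i) :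
    proj Γ G (of Γ G i s) = Pi.mulSingle i s := by
  simp [proj, of]

lemma hom_ext {M : Type*} [Monoid M] {Γ : SimpleGraph ι} {G : ι → Type*} [∀ i, Group (G i)]
    {F F' : GP Γ G →* M} (h : ∀ i s, F (of Γ G i s) = F' (of Γ G i s)) : F = F' := by
  have h2 : F.comp (QuotientGroup.mk' (Rels Γ G)) = F'.comp (QuotientGroup.mk' (Rels Γ G)) :=
    Monoid.CoprodI.ext_hom _ _ fun i => MonoidHom.ext fun s => h i s
  refine MonoidHom.ext fun x => ?_
  induction x using QuotientGroup.induction_on with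
  | _ z => exact DFunLike.congr_fun h2 z


section Theta

variable (Γ : SimpleGraph ι) (G G' : ι → Type*) [∀ i, Group (G i)] [∀ i, Group (G' i)]

/-- Auxiliary group for the cocycle construction of `Φ`. -/
@[ext] structure Aux where
  a : ∀ i, G i
  c : (∀ i, G i) → GP Γ G'

instance : Mul (Aux Γ G G') := ⟨fun x y => ⟨x.a * y.a, fun g => x.c g * y.c (g * x.a)⟩⟩
instance : One (Aux Γ G G') := ⟨⟨1, fun _ => 1⟩⟩
instance : Inv (Aux Γ G G') := ⟨fun x => ⟨x.a⁻¹, fun g => (x.c (g * x.a⁻¹))⁻¹⟩⟩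

@[simp] lemma Aux.mul_a (x y : Aux Γ G G') : (x * y).a = x.a * y.a := rfl
@[simp] lemma Aux.mul_c (x y : Aux Γ G G') (g : ∀ i, G i) :
    (x * y).c g = x.c g * y.c (g * x.a) := rfl
@[simp] lemma Aux.one_a : (1 : Aux Γ G G').a = 1 := rfl
@[simp] lemma Aux.one_c (g : ∀ i, G i) : (1 : Aux Γ G G').c g = 1 := rfl
@[simp] lemma Aux.inv_a (x : Aux Γ G G') : x⁻¹.a = x.a⁻¹ := rfl
@[simp] lemma Aux.inv_c (x : Aux Γ G G') (g : ∀ i, G i) :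
    x⁻¹.c g = (x.c (g * x.a⁻¹))⁻¹ := rfl

instance : Group (Aux Γ G G') where
  mul_assoc x y z := by ext <;> simp [mul_assoc]
  one_mul x := by ext <;> simp
  mul_one x := by ext <;> simp
  inv_mul_cancel x := by ext <;> simp

variable (f : ∀ i, G i → G' i)

/-- The subgroup of `Aux` of elements compatible with `f` and the projections. -/
def Qf : Subgroup (Aux Γ G G') where
  carrier := {x | ∀ g, proj Γ G' (x.c g) = fun i => (f i (g i))⁻¹ * f i (g i * x.a i)}
  one_mem' := by
    intro g
    funext i
    simp
  mul_mem' := by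
    intro x y hx hy g
    funext i
    simp only [Aux.mul_c, map_mul, hx g, hy (g * x.a), Pi.mul_apply, Aux.mul_a]
    group
  inv_mem' := by
    intro x hx g
    funext i
    simp only [Aux.inv_c, map_inv, hx (g * x.a⁻¹), Pi.inv_apply, Pi.mul_apply, Aux.inv_a]
    group

/-- The vertex homomorphisms into `Qf`. -/
def ThetaV (i : ι) : G i →* Qf Γ G G' f where
  toFun s := ⟨⟨Pi.mulSingle i s, fun g => of Γ G' i ((f i (g i))⁻¹ * f i (g i * s))⟩, by
    intro g
    funext j
    rcases eq_or_ne j i with rfl | hj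
    · simp
    · simp [Pi.mulSingle_eq_of_ne hj]⟩
  map_one' := by
    refine Subtype.ext (Aux.ext ?_ ?_)
    · simp
    · funext g
      simp
  map_mul' s t := by
    refine Subtype.ext (Aux.ext ?_ ?_)
    · simp [Pi.mulSingle_mul]
    · funext g
      show of Γ G' i ((f i (g i))⁻¹ * f i (g i * (s * t)))
        = of Γ G' i ((f i (g i))⁻¹ * f i (g i * s)) *
          of Γ G' i ((f i ((g * Pi.mulSingle i s) i))⁻¹ * f i ((g * Pi.mulSingle i s) i * t))
      rw [← map_mul]
      congr 1
      simp [mul_assoc]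

/-- The main homomorphism `Θ : GP Γ G →* Qf`. -/
def Theta : GP Γ G →* Qf Γ G G' f :=
  QuotientGroup.lift (Rels Γ G) (Monoid.CoprodI.lift (ThetaV Γ G G' f)) (by
    intro x hx
    refine Subgroup.normalClosure_le_normal ?_ hx
    rintro y ⟨i, j, g, h, hadj, rfl⟩
    simp only [SetLike.mem_coe, MonoidHom.mem_ker, map_commutatorElement,
      Monoid.CoprodI.lift_of]
    rw [commutatorElement_eq_one_iff_commute]
    have hij : i ≠ j := hadj.ne
    refine Subtype.ext (Aux.ext ?_ ?_)
    · exact (Pi.mulSingle_commute hij g h).eq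
    · funext g0
      show of Γ G' i _ * of Γ G' j ((f j ((g0 * Pi.mulSingle i g) j))⁻¹ *
              f j ((g0 * Pi.mulSingle i g) j * h))
        = of Γ G' j _ * of Γ G' i ((f i ((g0 * Pi.mulSingle j h) i))⁻¹ *
              f i ((g0 * Pi.mulSingle j h) i * g))
      rw [show (g0 * Pi.mulSingle i g) j = g0 j by simp [Pi.mulSingle_eq_of_ne hij.symm],
        show (g0 * Pi.mulSingle j h) i = g0 i by simp [Pi.mulSingle_eq_of_ne hij]]
      exact (of_commute hadj _ _).eq)

@[simp] lemma Theta_of (i : ι) (s : G i) :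
    Theta Γ G G' f (of Γ G i s) = ThetaV Γ G G' f i s := by
  simp [Theta, of]

/-- Projection onto the first component of `Aux`. -/
def fstHom : Aux Γ G G' →* (∀ i, G i) where
  toFun x := x.a
  map_one' := rfl
  map_mul' _ _ := rfl

lemma Theta_a (x : GP Γ G) : ((Theta Γ G G' f x : Aux Γ G G')).a = proj Γ G x := by
  have key : (fstHom Γ G G').comp ((Qf Γ G G' f).subtype.comp (Theta Γ G G' f)) = proj Γ G :=
    hom_ext fun i s => by simp [fstHom, ThetaV]
  exact DFunLike.congr_fun key x

/-- The induced homomorphism on kernels, `Φ_f : K_Γ → K'_Γ`. -/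
def PhiK : (proj Γ G).ker →* (proj Γ G').ker where
  toFun x := ⟨((Theta Γ G G' f x : Aux Γ G G')).c 1, by
    have hP := (Theta Γ G G' f x).2 1
    have ha : ((Theta Γ G G' f x : Aux Γ G G')).a = 1 := by
      rw [Theta_a]
      exact x.2
    rw [MonoidHom.mem_ker, hP, ha]
    funext i
    simp⟩
  map_one' := by
    refine Subtype.ext ?_
    show ((Theta Γ G G' f 1 : Aux Γ G G')).c 1 = 1
    rw [map_one]
    simp
  map_mul' x y := by
    refine Subtype.ext ?_
    show ((Theta Γ G G' f (x * y) : Aux Γ G G')).c 1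
      = ((Theta Γ G G' f x : Aux Γ G G')).c 1 * ((Theta Γ G G' f y : Aux Γ G G')).c 1
    have ha : ((Theta Γ G G' f (x : GP Γ G) : Aux Γ G G')).a = 1 := by
      rw [Theta_a]; exact x.2
    rw [map_mul]
    show ((Theta Γ G G' f (x : GP Γ G) : Aux Γ G G')).c 1 *
        ((Theta Γ G G' f (y : GP Γ G) : Aux Γ G G')).c
          (1 * ((Theta Γ G G' f (x : GP Γ G) : Aux Γ G G')).a) = _
    rw [ha, mul_one]

lemma PhiK_id (x : (proj Γ G).ker) : PhiK Γ G G (fun _ y => y) x = x := by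
  have hD : ((Qf Γ G G (fun _ y => y)).subtype.comp (Theta Γ G G (fun _ y => y)))
      = { toFun := fun z : GP Γ G => (⟨proj Γ G z, fun _ => z⟩ : Aux Γ G G),
          map_one' := by ext <;> simp,
          map_mul' := fun z w => by ext <;> simp } := by
    refine hom_ext fun i s => ?_
    refine Aux.ext ?_ ?_
    · simp [ThetaV]
    · funext g
      show of Γ G i ((g i)⁻¹ * (g i * s)) = of Γ G i s
      rw [inv_mul_cancel_left]
  refine Subtype.ext ?_
  show ((Theta Γ G G (fun _ y => y) (x : GP Γ G) : Aux Γ G G)).c 1 = (x : GP Γ G)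
  have := DFunLike.congr_fun hD (x : GP Γ G)
  rw [show ((Qf Γ G G (fun _ y => y)).subtype.comp (Theta Γ G G (fun _ y => y))) (x : GP Γ G)
    = ((Theta Γ G G (fun _ y => y) (x : GP Γ G) : Aux Γ G G)) from rfl] at this
  rw [this]
  rfl

variable (G'' : ι → Type*) [∀ i, Group (G'' i)]

/-- The comparison homomorphism used to prove functoriality of `Φ`. -/
def Lam (f' : ∀ i, G' i → G'' i) : Qf Γ G G' f →* Aux Γ G G'' where
  toFun q := ⟨(q : Aux Γ G G').a,
    fun g => ((Theta Γ G' G'' f' ((q : Aux Γ G G').c g) : Aux Γ G' G'')).c fun i => f i (g i)⟩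
  map_one' := by
    ext <;> simp
  map_mul' q r := by
    refine Aux.ext rfl ?_
    funext g
    show ((Theta Γ G' G'' f' ((q : Aux Γ G G').c g * (r : Aux Γ G G').c (g * (q : Aux Γ G G').a))
        : Aux Γ G' G'')).c (fun i => f i (g i))
      = ((Theta Γ G' G'' f' ((q : Aux Γ G G').c g) : Aux Γ G' G'')).c (fun i => f i (g i)) *
        ((Theta Γ G' G'' f' ((r : Aux Γ G G').c (g * (q : Aux Γ G G').a)) : Aux Γ G' G'')).c
          (fun i => f i ((g * (q : Aux Γ G G').a) i))
    rw [map_mul]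
    show ((Theta Γ G' G'' f' ((q : Aux Γ G G').c g) : Aux Γ G' G'')).c (fun i => f i (g i)) *
        ((Theta Γ G' G'' f' ((r : Aux Γ G G').c (g * (q : Aux Γ G G').a)) : Aux Γ G' G'')).c
          ((fun i => f i (g i)) * ((Theta Γ G' G'' f' ((q : Aux Γ G G').c g) : Aux Γ G' G'')).a)
      = _
    rw [Theta_a, q.2 g]
    exact congrArg _ (congrArg _ (funext fun i => by simp))

lemma Lam_Theta (f' : ∀ i, G' i → G'' i) (x : GP Γ G) :
    Lam Γ G G' f G'' f' (Theta Γ G G' f x)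
      = (Theta Γ G G'' (fun i y => f' i (f i y)) x : Aux Γ G G'') := by
  have key : (Lam Γ G G' f G'' f').comp (Theta Γ G G' f)
      = (Qf Γ G G'' (fun i y => f' i (f i y))).subtype.comp
          (Theta Γ G G'' (fun i y => f' i (f i y))) := by
    refine hom_ext fun i s => ?_
    refine Aux.ext ?_ ?_
    · simp [Lam, ThetaV]
    · funext g
      show ((Theta Γ G' G'' f' (of Γ G' i ((f i (g i))⁻¹ * f i (g i * s))) : Aux Γ G' G'')).c
          (fun j => f j (g j))
        = of Γ G'' i ((f' i (f i (g i)))⁻¹ * f' i (f i (g i * s)))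
      rw [Theta_of]
      show of Γ G'' i ((f' i (f i (g i)))⁻¹ *
          f' i (f i (g i) * ((f i (g i))⁻¹ * f i (g i * s)))) = _
      rw [mul_inv_cancel_left]
  exact DFunLike.congr_fun key x

lemma PhiK_comp (f' : ∀ i, G' i → G'' i) (hf1 : ∀ i, f i 1 = 1) (x : (proj Γ G).ker) :
    PhiK Γ G' G'' f' (PhiK Γ G G' f x)
      = PhiK Γ G G'' (fun i y => f' i (f i y)) x := by
  refine Subtype.ext ?_
  have h1 := Lam_Theta Γ G G' f G'' f' (x : GP Γ G)
  show ((Theta Γ G' G'' f' (((Theta Γ G G' f (x : GP Γ G) : Aux Γ G G')).c 1) : Aux Γ G' G'')).c 1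
    = ((Theta Γ G G'' (fun i y => f' i (f i y)) (x : GP Γ G) : Aux Γ G G'')).c 1
  rw [← h1]
  show ((Theta Γ G' G'' f' (((Theta Γ G G' f (x : GP Γ G) : Aux Γ G G')).c 1) : Aux Γ G' G'')).c 1
    = ((Theta Γ G' G'' f' (((Theta Γ G G' f (x : GP Γ G) : Aux Γ G G')).c 1)
        : Aux Γ G' G'')).c fun i => f i ((1 : ∀ i, G i) i)
  congr 1
  funext i
  exact (hf1 i).symm

end Theta

section KerCommutator

variable [Fintype ι] (Γ : SimpleGraph ι) (A : ι → Type*) [∀ i, CommGroup (A i)]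

lemma ker_proj_eq_commutator : (proj Γ A).ker = commutator (GP Γ A) := by
  apply le_antisymm
  · intro x hx
    let σ : (∀ i, A i) →* Abelianization (GP Γ A) :=
      MonoidHom.noncommPiCoprod (fun i => (Abelianization.of).comp (of Γ A i))
        (fun i j _ x y => Commute.all _ _)
    have key : σ.comp (proj Γ A) = Abelianization.of := by
      refine hom_ext fun i s => ?_
      show σ (proj Γ A (of Γ A i s)) = _
      rw [proj_of]
      exact MonoidHom.noncommPiCoprod_mulSingle _ i s
    have h1 : Abelianization.of (x : GP Γ A) = 1 := by
      have h2 := DFunLike.congr_fun key x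
      rw [← h2, MonoidHom.comp_apply, MonoidHom.mem_ker.1 hx, map_one]
    exact (QuotientGroup.eq_one_iff _).1 h1
  · exact Abelianization.commutator_subset_ker (proj Γ A)

end KerCommutator

end Retract


/-- If each vertex group is nontrivial, the commutator subgroup of the
right-angled Coxeter group on `Γ` (the graph product with all vertex groups of order 2)
is a retract of the kernel `K_Γ`. -/
theorem stmt12 {ι : Type*} [DecidableEq ι] [Fintype ι] (Γ : SimpleGraph ι)
    (G : ι → Type*) [∀ i, Group (G i)] [∀ i, Nontrivial (G i)] :
    ∃ (j : (commutator (GP Γ (fun _ : ι => Multiplicative (ZMod 2))) : Subgroup _) →*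
            (proj Γ G).ker)
      (r : (proj Γ G).ker →*
            (commutator (GP Γ (fun _ : ι => Multiplicative (ZMod 2))) : Subgroup _)),
      r.comp j = MonoidHom.id _ := by
  classical
  obtain ⟨gi, hgi⟩ : ∃ gi : ∀ i, G i, ∀ i, gi i ≠ 1 :=
    ⟨fun i => (exists_ne (1 : G i)).choose, fun i => (exists_ne (1 : G i)).choose_spec⟩
  let f : ∀ i, Multiplicative (ZMod 2) → G i := fun i x => if x = 1 then 1 else gi i
  let h : ∀ i, G i → Multiplicative (ZMod 2) :=
    fun i y => if y = 1 then 1 else Multiplicative.ofAdd 1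
  have hf1 : ∀ i, f i 1 = 1 := fun i => if_pos rfl
  have hhf : (fun (i : ι) (y : Multiplicative (ZMod 2)) => h i (f i y))
      = fun _ y => y := by
    funext i y
    show (if (if y = 1 then (1 : G i) else gi i) = 1 then (1 : Multiplicative (ZMod 2))
      else Multiplicative.ofAdd 1) = y
    by_cases hy : y = 1
    · rw [if_pos hy, if_pos rfl, hy]
    · rw [if_neg hy, if_neg (hgi i)]
      revert y
      decide
  have hK : (proj Γ (fun _ : ι => Multiplicative (ZMod 2))).ker
      = commutator (GP Γ (fun _ : ι => Multiplicative (ZMod 2))) :=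
    ker_proj_eq_commutator Γ _
  let e := MulEquiv.subgroupCongr hK
  refine ⟨(PhiK Γ (fun _ : ι => Multiplicative (ZMod 2)) G f).comp e.symm.toMonoidHom,
    e.toMonoidHom.comp (PhiK Γ G (fun _ : ι => Multiplicative (ZMod 2)) h), ?_⟩
  ext x
  have hcomp := PhiK_comp Γ (fun _ : ι => Multiplicative (ZMod 2)) G f
    (fun _ : ι => Multiplicative (ZMod 2)) h hf1 (e.symm x)
  simp only [MonoidHom.comp_apply, MonoidHom.id_apply, MulEquiv.coe_toMonoidHom]
  rw [hcomp, show (fun (i : ι) (y : Multiplicative (ZMod 2)) => h i (f i y))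
    = fun _ y => y from hhf, PhiK_id, MulEquiv.apply_symm_apply]


end GPaper
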